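/- Let F = sinh(√S·W) + ρ(cosh(√S·W) − e^{S/2}) with W ~ N(0,1), S > 0, ρ ∈ (−1,1), and let K ∈ ℝ with corresponding d = (1/√S)(asinh(−K/ρ* − (ρ/ρ*)e^{S/2}) + atanh ρ), ρ* = √(1−ρ²). Then E[(F − K)⁺] = (e^{S/2}/2)((1+ρ)N(d+√S) − (1−ρ)N(d−√S) − 2ρN(d)) − K·N(d). -/

import Mathlib

open MeasureTheory ProbabilityTheory

noncomputable def stdNormalCDF (x : ℝ) : ℝ := ((gaussianReal 0 1) (Set.Iic x)).toReal

noncomputable def artanh (x : ℝ) : ℝ := (1/2) * Real.log ((1 + x) / (1 - x))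

open Real hiding artanh
open Set
open scoped ENNReal NNReal

lemma pdf_eq (w : ℝ) : gaussianPDFReal 0 1 w = (Real.sqrt (2*π))⁻¹ * Real.exp (-w^2/2) := by
  simp [gaussianPDFReal]

lemma cdf_eq (x : ℝ) : stdNormalCDF x = ∫ w in Iic x, gaussianPDFReal 0 1 w := by
  rw [stdNormalCDF, gaussianReal_apply_eq_integral 0 one_ne_zero,
    ENNReal.toReal_ofReal (integral_nonneg fun _ => gaussianPDFReal_nonneg _ _ _)]

lemma exp_mul_pdf (a w : ℝ) :
    Real.exp (a*w) * gaussianPDFReal 0 1 w = Real.exp (a^2/2) * gaussianPDFReal 0 1 (w - a) := by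
  simp only [pdf_eq]
  have h : Real.exp (a*w) * Real.exp (-w^2/2) = Real.exp (a^2/2) * Real.exp (-(w-a)^2/2) := by
    rw [← Real.exp_add, ← Real.exp_add]; congr 1; ring
  calc Real.exp (a*w) * ((Real.sqrt (2*π))⁻¹ * Real.exp (-w^2/2))
      = (Real.sqrt (2*π))⁻¹ * (Real.exp (a*w) * Real.exp (-w^2/2)) := by ring
    _ = (Real.sqrt (2*π))⁻¹ * (Real.exp (a^2/2) * Real.exp (-(w-a)^2/2)) := by rw [h]
    _ = Real.exp (a^2/2) * ((Real.sqrt (2*π))⁻¹ * Real.exp (-(w-a)^2/2)) := by ring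

lemma integrable_exp_mul_pdf (a : ℝ) :
    Integrable (fun w => Real.exp (a*w) * gaussianPDFReal 0 1 w) := by
  have : (fun w => Real.exp (a*w) * gaussianPDFReal 0 1 w)
      = fun w => Real.exp (a^2/2) * gaussianPDFReal 0 1 (w - a) := funext fun w => exp_mul_pdf a w
  rw [this]
  exact (Integrable.comp_sub_right (integrable_gaussianPDFReal 0 1) a).const_mul _

lemma pdf_even (w : ℝ) : gaussianPDFReal 0 1 (-w) = gaussianPDFReal 0 1 w := by
  simp only [pdf_eq]; ring_nf

lemma shift_Ici (f : ℝ → ℝ) (a c : ℝ) :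
    ∫ w in Ici c, f (w - a) = ∫ w in Ici (c - a), f w := by
  rw [← integral_indicator measurableSet_Ici, ← integral_indicator measurableSet_Ici]
  have h : (fun w => (Ici c).indicator (fun w => f (w - a)) w)
      = fun w => (Ici (c - a)).indicator f (w - a) := by
    funext w
    simp only [indicator_apply, mem_Ici, sub_le_sub_iff_right]
  rw [h, integral_sub_right_eq_self]

lemma neg_Ici_pdf (b : ℝ) :
    ∫ w in Ici b, gaussianPDFReal 0 1 w = ∫ w in Iic (-b), gaussianPDFReal 0 1 w := by
  rw [integral_Ici_eq_integral_Ioi]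
  have : ∫ w in Ioi b, gaussianPDFReal 0 1 w = ∫ w in Ioi b, gaussianPDFReal 0 1 (-w) :=
    setIntegral_congr_fun measurableSet_Ioi fun w _ => (pdf_even w).symm
  rw [this, integral_comp_neg_Ioi]

lemma key_int (a c : ℝ) :
    ∫ w in Ici c, Real.exp (a*w) * gaussianPDFReal 0 1 w
      = Real.exp (a^2/2) * stdNormalCDF (a - c) := by
  have h1 : ∀ w, Real.exp (a*w) * gaussianPDFReal 0 1 w
      = Real.exp (a^2/2) * gaussianPDFReal 0 1 (w - a) := exp_mul_pdf a
  rw [setIntegral_congr_fun measurableSet_Ici (fun w _ => h1 w), integral_const_mul,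
    shift_Ici (gaussianPDFReal 0 1) a c, neg_Ici_pdf, cdf_eq]
  ring_nf

lemma gauss_setIntegral (s : Set ℝ) (hs : MeasurableSet s) (g : ℝ → ℝ) :
    ∫ w in s, g w ∂(gaussianReal 0 1) = ∫ w in s, g w * gaussianPDFReal 0 1 w := by
  rw [gaussianReal_of_var_ne_zero 0 one_ne_zero, restrict_withDensity hs,
    show gaussianPDF 0 1 = fun x => ((gaussianPDFReal 0 1 x).toNNReal : ℝ≥0∞) from rfl,
    integral_withDensity_eq_integral_smul (measurable_gaussianPDFReal 0 1).real_toNNReal g]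
  congr 1
  funext w
  rw [NNReal.smul_def, Real.coe_toNNReal _ (gaussianPDFReal_nonneg _ _ _), smul_eq_mul, mul_comm]

lemma exp_artanh {ρ : ℝ} (h1 : -1 < ρ) (h2 : ρ < 1) :
    Real.exp (artanh ρ) = Real.sqrt (1+ρ) / Real.sqrt (1-ρ) := by
  have ht : (0:ℝ) < (1+ρ)/(1-ρ) := div_pos (by linarith) (by linarith)
  rw [artanh, ← Real.sqrt_div (by linarith : (0:ℝ) ≤ 1+ρ), Real.sqrt_eq_rpow,
    Real.rpow_def_of_pos ht]
  ring_nf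

lemma sinh_artanh {ρ : ℝ} (h1 : -1 < ρ) (h2 : ρ < 1) :
    Real.sinh (artanh ρ) = ρ / (Real.sqrt (1+ρ) * Real.sqrt (1-ρ)) := by
  have hp : (0:ℝ) < Real.sqrt (1+ρ) := Real.sqrt_pos.2 (by linarith)
  have hq : (0:ℝ) < Real.sqrt (1-ρ) := Real.sqrt_pos.2 (by linarith)
  have hp2 : Real.sqrt (1+ρ) ^ 2 = 1+ρ := Real.sq_sqrt (by linarith)
  have hq2 : Real.sqrt (1-ρ) ^ 2 = 1-ρ := Real.sq_sqrt (by linarith)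
  rw [Real.sinh_eq, Real.exp_neg, exp_artanh h1 h2]
  field_simp
  linear_combination hp2 - hq2

lemma cosh_artanh {ρ : ℝ} (h1 : -1 < ρ) (h2 : ρ < 1) :
    Real.cosh (artanh ρ) = 1 / (Real.sqrt (1+ρ) * Real.sqrt (1-ρ)) := by
  have hp : (0:ℝ) < Real.sqrt (1+ρ) := Real.sqrt_pos.2 (by linarith)
  have hq : (0:ℝ) < Real.sqrt (1-ρ) := Real.sqrt_pos.2 (by linarith)
  have hp2 : Real.sqrt (1+ρ) ^ 2 = 1+ρ := Real.sq_sqrt (by linarith)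
  have hq2 : Real.sqrt (1-ρ) ^ 2 = 1-ρ := Real.sq_sqrt (by linarith)
  rw [Real.cosh_eq, Real.exp_neg, exp_artanh h1 h2]
  field_simp
  linear_combination hp2 + hq2

theorem stmt_16 (S ρ K : ℝ) (hS : 0 < S) (h1 : -1 < ρ) (h2 : ρ < 1)
    (ρs : ℝ) (hρs : ρs = Real.sqrt (1 - ρ^2))
    (F : ℝ → ℝ)
    (hF : F = fun w => Real.sinh (Real.sqrt S * w)
      + ρ * (Real.cosh (Real.sqrt S * w) - Real.exp (S/2)))
    (d : ℝ)
    (hd : d = (1 / Real.sqrt S) *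
      (Real.arsinh (-K / ρs - (ρ / ρs) * Real.exp (S/2)) + artanh ρ)) :
    (∫ w, max (F w - K) 0 ∂(gaussianReal 0 1)) =
      (Real.exp (S/2) / 2) *
        ((1 + ρ) * stdNormalCDF (d + Real.sqrt S)
          - (1 - ρ) * stdNormalCDF (d - Real.sqrt S)
          - 2 * ρ * stdNormalCDF d)
      - K * stdNormalCDF d := by
  have hsS : 0 < Real.sqrt S := Real.sqrt_pos.2 hS
  have hS2 : Real.sqrt S ^ 2 = S := Real.sq_sqrt hS.le
  have hρs_pos : 0 < ρs := by rw [hρs]; exact Real.sqrt_pos.2 (by nlinarith)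
  have hρs2 : ρs ^ 2 = 1 - ρ ^ 2 := by rw [hρs]; exact Real.sq_sqrt (by nlinarith)
  set A : ℝ := -K / ρs - (ρ / ρs) * Real.exp (S/2) with hA
  have hρs_eq : ρs = Real.sqrt (1+ρ) * Real.sqrt (1-ρ) := by
    rw [hρs, show (1:ℝ) - ρ^2 = (1+ρ)*(1-ρ) by ring, Real.sqrt_mul (by linarith)]
  have hsθ : Real.sinh (artanh ρ) = ρ / ρs := by rw [sinh_artanh h1 h2, ← hρs_eq]
  have hcθ : Real.cosh (artanh ρ) = 1 / ρs := by rw [cosh_artanh h1 h2, ← hρs_eq]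
  have hdd : Real.sqrt S * (-d) = -(Real.arsinh A + artanh ρ) := by
    rw [hd]; field_simp
  have hAρs : A * ρs = -K - ρ * Real.exp (S/2) := by
    rw [hA]; field_simp
  have hFd : F (-d) = K := by
    rw [hF]
    simp only
    rw [hdd, Real.sinh_neg, Real.cosh_neg, Real.sinh_add, Real.cosh_add,
      Real.sinh_arsinh, Real.cosh_arsinh, hsθ, hcθ]
    field_simp
    linear_combination (-ρs) * hAρs + A * hρs2
  have hFalt : ∀ w, F w = (1+ρ)/2 * Real.exp (Real.sqrt S * w)
      - (1-ρ)/2 * Real.exp (-(Real.sqrt S * w)) - ρ * Real.exp (S/2) := by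
    intro w; rw [hF]; simp only [Real.sinh_eq, Real.cosh_eq]; ring
  have hmono : StrictMono F := by
    intro x y hxy
    rw [hFalt x, hFalt y]
    have e1 : Real.exp (Real.sqrt S * x) < Real.exp (Real.sqrt S * y) :=
      Real.exp_lt_exp.2 (by nlinarith)
    have e2 : Real.exp (-(Real.sqrt S * y)) < Real.exp (-(Real.sqrt S * x)) :=
      Real.exp_lt_exp.2 (by nlinarith)
    have t1 : 0 < (1+ρ)/2 * (Real.exp (Real.sqrt S * y) - Real.exp (Real.sqrt S * x)) :=
      mul_pos (by linarith) (sub_pos.2 e1)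
    have t2 : 0 < (1-ρ)/2 * (Real.exp (-(Real.sqrt S * x)) - Real.exp (-(Real.sqrt S * y))) :=
      mul_pos (by linarith) (sub_pos.2 e2)
    nlinarith [t1, t2]
  have hind : (fun w => max (F w - K) 0) = Set.indicator (Set.Ici (-d)) (fun w => F w - K) := by
    funext w
    rw [Set.indicator_apply]
    split_ifs with h
    · exact max_eq_left (sub_nonneg.2 (hFd ▸ hmono.monotone (Set.mem_Ici.1 h)))
    · refine max_eq_right (le_of_lt (sub_neg.2 ?_))
      exact hFd ▸ hmono (lt_of_not_ge fun hc => h (Set.mem_Ici.2 hc))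
  rw [hind, integral_indicator measurableSet_Ici, gauss_setIntegral _ measurableSet_Ici]
  have hsplit : ∀ w ∈ Set.Ici (-d), (F w - K) * gaussianPDFReal 0 1 w
      = (1+ρ)/2 * (Real.exp (Real.sqrt S * w) * gaussianPDFReal 0 1 w)
      - (1-ρ)/2 * (Real.exp (-Real.sqrt S * w) * gaussianPDFReal 0 1 w)
      - (ρ * Real.exp (S/2) + K) * (Real.exp (0 * w) * gaussianPDFReal 0 1 w) := by
    intro w _
    rw [hF]; simp only [Real.sinh_eq, Real.cosh_eq, neg_mul, zero_mul, Real.exp_zero]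
    ring
  rw [setIntegral_congr_fun measurableSet_Ici hsplit]
  have i1 : Integrable (fun w => Real.exp (Real.sqrt S * w) * gaussianPDFReal 0 1 w)
      (volume.restrict (Set.Ici (-d))) := (integrable_exp_mul_pdf _).restrict
  have i2 : Integrable (fun w => Real.exp (-Real.sqrt S * w) * gaussianPDFReal 0 1 w)
      (volume.restrict (Set.Ici (-d))) := (integrable_exp_mul_pdf _).restrict
  have i3 : Integrable (fun w => Real.exp (0 * w) * gaussianPDFReal 0 1 w)
      (volume.restrict (Set.Ici (-d))) := (integrable_exp_mul_pdf _).restrict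
  have i12 : Integrable (fun w => (1+ρ)/2 * (Real.exp (Real.sqrt S * w) * gaussianPDFReal 0 1 w)
      - (1-ρ)/2 * (Real.exp (-Real.sqrt S * w) * gaussianPDFReal 0 1 w))
      (volume.restrict (Set.Ici (-d))) := (i1.const_mul _).sub (i2.const_mul _)
  rw [integral_sub i12 (i3.const_mul _),
    integral_sub (i1.const_mul _) (i2.const_mul _),
    integral_const_mul, integral_const_mul, integral_const_mul,
    key_int (Real.sqrt S) (-d), key_int (-Real.sqrt S) (-d), key_int 0 (-d)]
  have e1 : Real.sqrt S - -d = d + Real.sqrt S := by ring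
  have e2 : -Real.sqrt S - -d = d - Real.sqrt S := by ring
  have e3 : (0:ℝ) - -d = d := by ring
  have e4 : (-Real.sqrt S)^2 = S := by rw [neg_sq, hS2]
  have e5 : ((0:ℝ))^2/2 = 0 := by norm_num
  rw [e1, e2, e3, e4, e5, hS2, Real.exp_zero]
  ring
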